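/- Let P be a finite poset and M = {t₁ < ⋯ < t_m} a maximal chain such that every in-edge of M has index strictly greater than every out-edge of M. Then every maximal chain C of P contains the endpoints of at most one in-edge of M and at most one out-edge of M. -/

import Mathlib

open scoped Classical in
/-- The finite set of maximal chains of a finite poset, as finsets. -/
noncomputable def maxChains (α : Type*) [Fintype α] [PartialOrder α] : Finset (Finset α) :=
  Finset.univ.filter (fun s : Finset α => IsMaxChain (· ≤ ·) (s : Set α))

/-- The multiset of cardinalities of the maximal chains of a finite poset. -/
noncomputable def mcMultiset (α : Type*) [Fintype α] [PartialOrder α] : Multiset ℕ :=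
  (maxChains α).val.map Finset.card


open scoped Classical

/-- If some element above `t i` is outside the range, there is an out-edge of index ≥ i. -/
lemma aux_out_edge_above {α : Type*} [Fintype α] [PartialOrder α]
    {m : ℕ} {t : Fin m → α} (ht : StrictMono t) {i : Fin m} {x : α}
    (hx : x ∉ Set.range t) (hlt : t i < x) :
    ∃ (k : Fin m) (z : α), i ≤ k ∧ z ∉ Set.range t ∧ t k ⋖ z := by
  classical
  set S : Finset (Fin m) := Finset.univ.filter (fun k => t k < x) with hS
  have hiS : i ∈ S := by simp [hS, hlt]
  have hSne : S.Nonempty := ⟨i, hiS⟩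
  set k := S.max' hSne with hk
  have hkS : k ∈ S := S.max'_mem hSne
  have hkx : t k < x := by simpa [hS] using hkS
  have hik : i ≤ k := S.le_max' i hiS
  set T : Finset α := Finset.univ.filter (fun z => t k < z ∧ z ≤ x) with hT
  have hxT : x ∈ T := by simp [hT, hkx]
  obtain ⟨z, hzT, hzmin⟩ := T.exists_minimal ⟨x, hxT⟩
  have hz1 : t k < z ∧ z ≤ x := by simpa [hT] using hzT
  refine ⟨k, z, hik, ?_, ?_⟩
  · rintro ⟨l, rfl⟩
    have hkl : k < l := ht.lt_iff_lt.mp hz1.1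
    rcases lt_or_eq_of_le hz1.2 with h | h
    · have : l ∈ S := by simp [hS, h]
      exact absurd (S.le_max' l this) (not_le.mpr hkl)
    · exact hx ⟨l, h⟩
  · refine ⟨hz1.1, fun c hc1 hc2 => ?_⟩
    have : c ∈ T := by simp [hT]; exact ⟨hc1, hc2.le.trans hz1.2⟩
    exact absurd (hzmin this hc2.le) (not_le_of_gt hc2)

/-- If some element below `t j` is outside the range, there is an in-edge of index ≤ j. -/
lemma aux_in_edge_below {α : Type*} [Fintype α] [PartialOrder α]
    {m : ℕ} {t : Fin m → α} (ht : StrictMono t) {j : Fin m} {x : α}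
    (hx : x ∉ Set.range t) (hlt : x < t j) :
    ∃ (k : Fin m) (y : α), k ≤ j ∧ y ∉ Set.range t ∧ y ⋖ t k := by
  classical
  set S : Finset (Fin m) := Finset.univ.filter (fun k => x < t k) with hS
  have hjS : j ∈ S := by simp [hS, hlt]
  have hSne : S.Nonempty := ⟨j, hjS⟩
  set k := S.min' hSne with hk
  have hkS : k ∈ S := S.min'_mem hSne
  have hkx : x < t k := by simpa [hS] using hkS
  have hkj : k ≤ j := S.min'_le j hjS
  set T : Finset α := Finset.univ.filter (fun y => y < t k ∧ x ≤ y) with hT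
  have hxT : x ∈ T := by simp [hT, hkx]
  obtain ⟨y, hyT, hymax⟩ := T.exists_maximal ⟨x, hxT⟩
  have hy1 : y < t k ∧ x ≤ y := by simpa [hT] using hyT
  refine ⟨k, y, hkj, ?_, ?_⟩
  · rintro ⟨l, rfl⟩
    have hlk : l < k := ht.lt_iff_lt.mp hy1.1
    rcases lt_or_eq_of_le hy1.2 with h | h
    · have : l ∈ S := by simp [hS, h]
      exact absurd (S.min'_le l this) (not_le.mpr hlk)
    · exact hx ⟨l, h.symm⟩
  · refine ⟨hy1.1, fun c hc1 hc2 => ?_⟩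
    have : c ∈ T := by simp [hT]; exact ⟨hc2, hy1.2.trans hc1.le⟩
    exact absurd (hymax this hc1.le) (not_le_of_gt hc1)

theorem max_chain_at_most_one_in_out_edge {α : Type*} [Fintype α] [PartialOrder α]
    (m : ℕ) (t : Fin m → α) (ht : StrictMono t)
    (hM : IsMaxChain (· ≤ ·) (Set.range t))
    (hidx : ∀ (i j : Fin m) (y z : α), y ∉ Set.range t → z ∉ Set.range t →
      y ⋖ t i → t j ⋖ z → j < i) :
    ∀ C : Set α, IsMaxChain (· ≤ ·) C →
      (∀ (i i' : Fin m) (y y' : α), y ∉ Set.range t → y' ∉ Set.range t →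
        y ⋖ t i → y' ⋖ t i' → y ∈ C → t i ∈ C → y' ∈ C → t i' ∈ C → y = y' ∧ i = i') ∧
      (∀ (j j' : Fin m) (z z' : α), z ∉ Set.range t → z' ∉ Set.range t →
        t j ⋖ z → t j' ⋖ z' → z ∈ C → t j ∈ C → z' ∈ C → t j' ∈ C → z = z' ∧ j = j') := by
  intro C hC
  have hchain : IsChain (· ≤ ·) C := hC.1
  -- key for in-edges, assuming i ≤ i'
  have key_in : ∀ (i i' : Fin m) (y y' : α), y ∉ Set.range t → y' ∉ Set.range t →
      y ⋖ t i → y' ⋖ t i' → y ∈ C → t i ∈ C → y' ∈ C → t i' ∈ C → i ≤ i' → i = i' := by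
    intro i i' y y' hy hy' hyi hyi' hyC htiC hy'C hti'C hle
    rcases eq_or_lt_of_le hle with h | hlt
    · exact h
    exfalso
    have hne : t i ≠ y' := fun h => hy' ⟨i, h⟩
    rcases hchain htiC hy'C hne with h | h
    · obtain ⟨k, z, hik, hz, hcov⟩ := aux_out_edge_above ht hy' (lt_of_le_of_ne h hne)
      exact absurd (hidx i k y z hy hz hyi hcov) (not_lt.mpr hik)
    · rcases lt_or_eq_of_le h with h' | h'
      · exact hyi'.2 h' (ht hlt)
      · exact hy' ⟨i, h'.symm⟩
  have key_out : ∀ (j j' : Fin m) (z z' : α), z ∉ Set.range t → z' ∉ Set.range t →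
      t j ⋖ z → t j' ⋖ z' → z ∈ C → t j ∈ C → z' ∈ C → t j' ∈ C → j ≤ j' → j = j' := by
    intro j j' z z' hz hz' hjz hjz' hzC htjC hz'C htj'C hle
    rcases eq_or_lt_of_le hle with h | hlt
    · exact h
    exfalso
    have hne : z ≠ t j' := fun h => hz ⟨j', h.symm⟩
    rcases hchain hzC htj'C hne with h | h
    · rcases lt_or_eq_of_le h with h' | h'
      · obtain ⟨k, y, hkj, hy, hcov⟩ := aux_in_edge_below ht hz h'
        exact absurd (hidx k j' y z' hy hz' hcov hjz') (not_lt.mpr hkj)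
      · exact hz ⟨j', h'.symm⟩
    · exact hjz.2 (ht hlt) (lt_of_le_of_ne h fun e => hne e.symm)
  constructor
  · intro i i' y y' hy hy' hyi hyi' hyC htiC hy'C hti'C
    have hii : i = i' := by
      rcases le_total i i' with h | h
      · exact key_in i i' y y' hy hy' hyi hyi' hyC htiC hy'C hti'C h
      · exact (key_in i' i y' y hy' hy hyi' hyi hy'C hti'C hyC htiC h).symm
    subst hii
    refine ⟨?_, rfl⟩
    by_contra hne
    rcases hchain hyC hy'C hne with h | h
    · exact hyi.2 (lt_of_le_of_ne h hne) hyi'.1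
    · exact hyi'.2 (lt_of_le_of_ne h fun e => hne e.symm) hyi.1
  · intro j j' z z' hz hz' hjz hjz' hzC htjC hz'C htj'C
    have hjj : j = j' := by
      rcases le_total j j' with h | h
      · exact key_out j j' z z' hz hz' hjz hjz' hzC htjC hz'C htj'C h
      · exact (key_out j' j z' z hz' hz hjz' hjz hz'C htj'C hzC htjC h).symm
    subst hjj
    refine ⟨?_, rfl⟩
    by_contra hne
    rcases hchain hzC hz'C hne with h | h
    · exact hjz'.2 hjz.1 (lt_of_le_of_ne h hne)
    · exact hjz.2 hjz'.1 (lt_of_le_of_ne h fun e => hne e.symm)
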